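/- Let E be a CPTP map from M_n(C) to M_k(C) and ρ a positive definite density matrix on C^n with E(ρ) positive definite. Then the Petz recovery map R(Y) := ρ^{1/2} E†(E(ρ)^{-1/2} Y E(ρ)^{-1/2}) ρ^{1/2} is completely positive and trace-preserving, and satisfies R(E(ρ)) = ρ. -/

import Mathlib

open Matrix
open scoped ComplexOrder

noncomputable def tensorId13 {γ ι κ : Type*}
    (L : Matrix ι ι ℂ → Matrix κ κ ℂ)
    (M : Matrix (γ × ι) (γ × ι) ℂ) : Matrix (γ × κ) (γ × κ) ℂ :=
  fun p q => L (fun i j => M (p.1, i) (q.1, j)) p.2 q.2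

/-- The square root `Matrix.PosSemidef.sqrt` of the older Mathlib (removed since), with its
old definition. -/
noncomputable def posSemidefSqrt13 {n : Type*} [Fintype n] [DecidableEq n] {A : Matrix n n ℂ}
    (hA : A.PosSemidef) : Matrix n n ℂ :=
  hA.1.eigenvectorUnitary.1 * diagonal ((↑) ∘ (√·) ∘ hA.1.eigenvalues) *
    (star hA.1.eigenvectorUnitary : Matrix n n ℂ)

theorem posSemidefSqrt13_herm {n : Type*} [Fintype n] [DecidableEq n] {A : Matrix n n ℂ}
    (hA : A.PosSemidef) : (posSemidefSqrt13 hA)ᴴ = posSemidefSqrt13 hA := by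
  unfold posSemidefSqrt13
  have hd : (diagonal ((↑) ∘ (√·) ∘ hA.1.eigenvalues : n → ℂ))ᴴ
      = diagonal ((↑) ∘ (√·) ∘ hA.1.eigenvalues : n → ℂ) := by
    rw [diagonal_conjTranspose]
    congr 1
    funext i
    simp [Complex.conj_ofReal]
  rw [conjTranspose_mul, conjTranspose_mul, hd]
  simp [Matrix.mul_assoc, star_eq_conjTranspose]

theorem posSemidefSqrt13_mul_self {n : Type*} [Fintype n] [DecidableEq n] {A : Matrix n n ℂ}
    (hA : A.PosSemidef) : posSemidefSqrt13 hA * posSemidefSqrt13 hA = A := by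
  unfold posSemidefSqrt13
  have hU : (star hA.1.eigenvectorUnitary : Matrix n n ℂ) * hA.1.eigenvectorUnitary.1 = 1 :=
    Unitary.coe_star_mul_self _
  have hD : diagonal ((↑) ∘ (√·) ∘ hA.1.eigenvalues : n → ℂ) *
      diagonal ((↑) ∘ (√·) ∘ hA.1.eigenvalues : n → ℂ)
      = diagonal (RCLike.ofReal ∘ hA.1.eigenvalues) := by
    rw [diagonal_mul_diagonal]
    congr 1
    funext i
    simp only [Function.comp_apply]
    rw [← Complex.ofReal_mul, Real.mul_self_sqrt (hA.eigenvalues_nonneg i)]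
    rfl
  conv_rhs => rw [hA.1.spectral_theorem, Unitary.conjStarAlgAut_apply]
  calc _ = hA.1.eigenvectorUnitary.1 * diagonal ((↑) ∘ (√·) ∘ hA.1.eigenvalues : n → ℂ) *
        ((star hA.1.eigenvectorUnitary : Matrix n n ℂ) * hA.1.eigenvectorUnitary.1) *
        diagonal ((↑) ∘ (√·) ∘ hA.1.eigenvalues : n → ℂ) *
        (star hA.1.eigenvectorUnitary : Matrix n n ℂ) := by simp only [Matrix.mul_assoc]
    _ = _ := by rw [hU, Matrix.mul_one, Matrix.mul_assoc _ (diagonal _) (diagonal _), hD]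

/-- for a CPTP map E (with Kraus operators E_a) and a positive definite
state ρ with E(ρ) positive definite, the Petz recovery map
R(Y) = ρ^{1/2} E†(E(ρ)^{-1/2} Y E(ρ)^{-1/2}) ρ^{1/2} is completely positive,
trace-preserving, and satisfies R(E(ρ)) = ρ. -/
theorem stmt13 {n k m : ℕ} (E : Fin m → Matrix (Fin k) (Fin n) ℂ)
    (htp : ∑ a, (E a)ᴴ * E a = 1)
    (ρ : Matrix (Fin n) (Fin n) ℂ) (hρ : ρ.PosDef) (htrρ : ρ.trace = 1)
    (σ : Matrix (Fin k) (Fin k) ℂ) (hσdef : σ = ∑ a, E a * ρ * (E a)ᴴ)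
    (hσ : σ.PosDef)
    (R : Matrix (Fin k) (Fin k) ℂ → Matrix (Fin n) (Fin n) ℂ)
    (hR : ∀ Y, R Y = (posSemidefSqrt13 hρ.posSemidef) *
        (∑ a, (E a)ᴴ * (((posSemidefSqrt13 hσ.posSemidef))⁻¹ * Y * ((posSemidefSqrt13 hσ.posSemidef))⁻¹) * E a) *
          (posSemidefSqrt13 hρ.posSemidef)) :
    (∀ Y, (R Y).trace = Y.trace) ∧
    (∀ (d : ℕ) (M : Matrix (Fin d × Fin k) (Fin d × Fin k) ℂ), M.PosSemidef →
      (tensorId13 R M).PosSemidef) ∧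
    R σ = ρ := by
  set r := posSemidefSqrt13 hρ.posSemidef with hr_def
  set s := posSemidefSqrt13 hσ.posSemidef with hs_def
  have hrH : rᴴ = r := posSemidefSqrt13_herm hρ.posSemidef
  have hsH : sᴴ = s := posSemidefSqrt13_herm hσ.posSemidef
  have hrr : r * r = ρ := posSemidefSqrt13_mul_self hρ.posSemidef
  have hss : s * s = σ := posSemidefSqrt13_mul_self hσ.posSemidef
  have hsdet : IsUnit s.det := by
    have h : s.det * s.det = σ.det := by rw [← det_mul, hss]
    have hσd : σ.det ≠ 0 := hσ.det_pos.ne'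
    refine isUnit_iff_ne_zero.mpr fun h0 => hσd ?_
    rw [← h, h0, mul_zero]
  have hs1 : s⁻¹ * s = 1 := nonsing_inv_mul s hsdet
  have hs2 : s * s⁻¹ = 1 := mul_nonsing_inv s hsdet
  have hsinvH : (s⁻¹)ᴴ = s⁻¹ := by rw [conjTranspose_nonsing_inv, hsH]
  have hsσs : s⁻¹ * σ * s⁻¹ = 1 := by
    rw [← hss, ← mul_assoc, hs1, one_mul, hs2]
  -- Kraus form of R
  have hRF : ∀ Y, R Y = ∑ a, (r * (E a)ᴴ * s⁻¹) * Y * (r * (E a)ᴴ * s⁻¹)ᴴ := by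
    intro Y
    rw [hR Y, Finset.mul_sum, Finset.sum_mul]
    refine Finset.sum_congr rfl fun a _ => ?_
    simp only [conjTranspose_mul, hsinvH, hrH, conjTranspose_conjTranspose]
    simp only [Matrix.mul_assoc]
  have hFF : ∑ a, (r * (E a)ᴴ * s⁻¹)ᴴ * (r * (E a)ᴴ * s⁻¹) = 1 := by
    have h1 : ∀ a : Fin m, (r * (E a)ᴴ * s⁻¹)ᴴ * (r * (E a)ᴴ * s⁻¹)
        = s⁻¹ * (E a * ρ * (E a)ᴴ) * s⁻¹ := by
      intro a
      simp only [conjTranspose_mul, hsinvH, hrH, conjTranspose_conjTranspose]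
      rw [← hrr]; simp only [Matrix.mul_assoc]
    rw [Finset.sum_congr rfl fun a _ => h1 a]
    have h2 : ∑ a, s⁻¹ * (E a * ρ * (E a)ᴴ) * s⁻¹ = s⁻¹ * σ * s⁻¹ := by
      rw [hσdef, Finset.mul_sum, Finset.sum_mul]
    rw [h2, hsσs]
  refine ⟨?_, ?_, ?_⟩
  · intro Y
    rw [hRF Y, trace_sum]
    have h3 : ∀ a ∈ (Finset.univ : Finset (Fin m)),
        ((r * (E a)ᴴ * s⁻¹) * Y * (r * (E a)ᴴ * s⁻¹)ᴴ).trace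
          = ((r * (E a)ᴴ * s⁻¹)ᴴ * (r * (E a)ᴴ * s⁻¹) * Y).trace :=
      fun a _ => trace_mul_cycle _ _ _
    rw [Finset.sum_congr rfl h3, ← trace_sum, ← Finset.sum_mul, hFF, one_mul]
  · intro d M hM
    have key : tensorId13 R M = ∑ a,
        (Matrix.of fun (p : Fin d × Fin n) (q : Fin d × Fin k) => if p.1 = q.1 then (r * (E a)ᴴ * s⁻¹) p.2 q.2 else 0) * M *
        (Matrix.of fun (p : Fin d × Fin n) (q : Fin d × Fin k) => if p.1 = q.1 then (r * (E a)ᴴ * s⁻¹) p.2 q.2 else 0)ᴴ := by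
      ext p q
      simp only [tensorId13, hRF, Matrix.sum_apply]
      rw [show (fun i j => M (p.1, i) (q.1, j)) = Matrix.of (fun i j => M (p.1, i) (q.1, j)) from rfl, hRF]
      simp only [Matrix.sum_apply]
      refine Finset.sum_congr rfl fun a _ => ?_
      simp only [Matrix.mul_apply, conjTranspose_apply, Fintype.sum_prod_type]
      simp only [Matrix.of_apply, apply_ite star, star_zero, ite_mul, mul_ite,
        zero_mul, mul_zero, Finset.sum_ite_eq, Finset.sum_ite_eq',
        Finset.mem_univ, if_true]
      rw [Finset.sum_comm]
      refine Finset.sum_congr rfl fun u _ => ?_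
      rw [Finset.sum_ite_eq]
      simp only [Finset.mem_univ, if_true]
      rw [Finset.sum_comm]
      simp only [Finset.sum_ite_eq, Finset.mem_univ, if_true]
    rw [key]
    exact Finset.sum_induction _ Matrix.PosSemidef (fun _ _ => Matrix.PosSemidef.add)
      Matrix.PosSemidef.zero (fun a _ => hM.mul_mul_conjTranspose_same _)
  · rw [hR σ, hsσs]
    simp only [Matrix.mul_one]
    rw [htp, Matrix.mul_one, hrr]
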